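/- The clients of cheap clusters are 2-approximately served by the nearest center to their optimal center: let ε ∈ (0, 1/12], n := |D| ≥ 3, opt := cost(OPT) > 0, cost(S) ≤ 5·opt, and for each o ∈ OPT with C_o ≠ ∅ fix an ε-quantile radius a_o with leaders L_o and average γ_o. Let 𝒞 ⊆ {o ∈ OPT : C_o ≠ ∅} be partitioned into three sets 𝒞_cov, 𝒞_light, 𝒞_V such that: every o ∈ 𝒞_cov satisfies d(o,S) ≤ (1+ε)·a_o + ε·γ_o; every o ∈ 𝒞_light satisfies Σ_{p∈L_o} d(p,S) ≤ ε⁵·opt/ln n, and moreover |𝒞_light| ≤ (ln n)/ε³; and Σ_{o∈𝒞_V} Σ_{p∈C_o} d(p,S) ≤ ε²·opt. Then Σ_{o∈𝒞} Σ_{p∈C_o} d(p, t(o)) ≤ 2·Σ_{o∈𝒞} Σ_{p∈C_o} d(p,o) + 20·ε·opt. -/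

import Mathlib

open Finset

/-- `d(p,S)`: distance from `p` to the closest point of `S` (junk `0` if `S = ∅`). -/
noncomputable def dS {X : Type*} [MetricSpace X] (p : X) (S : Finset X) : ℝ :=
  if h : S.Nonempty then S.inf' h (fun c => dist p c) else 0

/-- `cost(S) = Σ_{p∈D} d(p,S)`. -/
noncomputable def kmCost {X : Type*} [MetricSpace X] (D S : Finset X) : ℝ :=
  ∑ p ∈ D, dS p S

/-- The cluster of center `o` under assignment `σ`. -/
def cluster {X : Type*} [DecidableEq X] (D : Finset X) (σ : X → X) (o : X) : Finset X :=
  D.filter (fun p => σ p = o)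

lemma dS_nonneg {X : Type*} [MetricSpace X] (p : X) (S : Finset X) : 0 ≤ dS p S := by
  unfold dS
  split_ifs with h
  · obtain ⟨c, hc, hce⟩ := S.exists_mem_eq_inf' h (fun c => dist p c)
    rw [hce]; exact dist_nonneg
  · exact le_rfl

lemma dS_le {X : Type*} [MetricSpace X] (p c : X) {S : Finset X} (hc : c ∈ S) :
    dS p S ≤ dist p c := by
  unfold dS
  rw [dif_pos ⟨c, hc⟩]
  exact inf'_le _ hc

lemma dS_triangle {X : Type*} [MetricSpace X] (o p : X) {S : Finset X} (hS : S.Nonempty) :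
    dS o S ≤ dist o p + dS p S := by
  obtain ⟨c, hc, hce⟩ := S.exists_mem_eq_inf' hS (fun q => dist p q)
  have hpc : dS p S = dist p c := by unfold dS; rw [dif_pos hS]; exact hce
  rw [hpc]
  calc dS o S ≤ dist o c := dS_le o c hc
    _ ≤ dist o p + dist p c := dist_triangle o p c

set_option maxHeartbeats 1600000 in
/-- The clients of cheap clusters are 2-approximately served by the nearest center
`t(o) ∈ S` to their optimal center: for the union `𝒞 = 𝒞_cov ∪ 𝒞_light ∪ 𝒞_V` of covered,
light and `V`-clusters,
`Σ_{o∈𝒞} Σ_{p∈C_o} d(p,t(o)) ≤ 2·Σ_{o∈𝒞} Σ_{p∈C_o} d(p,o) + 20·ε·opt`. -/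
theorem cheap_clusters_cost_bound {X : Type*} [MetricSpace X] [DecidableEq X]
    (D F : Finset X) (hD3 : 3 ≤ D.card)
    (ε : ℝ) (hε0 : 0 < ε) (hε1 : ε ≤ 1 / 12)
    (OPT : Finset X) (hOPTne : OPT.Nonempty) (hOPTF : OPT ⊆ F)
    (σ : X → X) (hσ : ∀ p ∈ D, σ p ∈ OPT ∧ dist p (σ p) = dS p OPT)
    (S : Finset X) (hSne : S.Nonempty) (hSF : S ⊆ F)
    (t : X → X) (ht : ∀ o ∈ OPT, t o ∈ S ∧ dist o (t o) = dS o S)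
    (hoptpos : 0 < kmCost D OPT)
    (h5 : kmCost D S ≤ 5 * kmCost D OPT)
    -- `a o` is an ε-quantile radius for each nonempty cluster:
    (a : X → ℝ)
    (hquant : ∀ o ∈ OPT, (cluster D σ o).Nonempty →
      0 ≤ a o ∧
      ε * ((cluster D σ o).card : ℝ)
        ≤ (((cluster D σ o).filter (fun p => dist p o ≤ a o)).card : ℝ) ∧
      (1 - ε) * ((cluster D σ o).card : ℝ)
        ≤ (((cluster D σ o).filter (fun p => a o ≤ dist p o)).card : ℝ))
    -- the three parts of 𝒞:
    (Ccov Clight CV : Finset X)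
    (hCcov : ∀ o ∈ Ccov, o ∈ OPT ∧ (cluster D σ o).Nonempty)
    (hClight : ∀ o ∈ Clight, o ∈ OPT ∧ (cluster D σ o).Nonempty)
    (hCV : ∀ o ∈ CV, o ∈ OPT ∧ (cluster D σ o).Nonempty)
    (hd1 : Disjoint Ccov Clight) (hd2 : Disjoint Ccov CV) (hd3 : Disjoint Clight CV)
    -- covered clusters:
    (hcov : ∀ o ∈ Ccov, dS o S ≤ (1 + ε) * a o
      + ε * ((1 / ((cluster D σ o).card : ℝ))
          * ∑ p ∈ cluster D σ o, (dist p o + dS p S)))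
    -- light clusters: their leaders are cheap in S, and there are few of them:
    (hlight : ∀ o ∈ Clight,
      ∑ p ∈ (cluster D σ o).filter (fun p => dist p o ≤ a o), dS p S
        ≤ ε ^ 5 * kmCost D OPT / Real.log D.card)
    (hlightcard : ((Clight.card : ℝ)) ≤ Real.log D.card / ε ^ 3)
    -- the V clusters have small total cost in S:
    (hV : ∑ o ∈ CV, ∑ p ∈ cluster D σ o, dS p S ≤ ε ^ 2 * kmCost D OPT) :
    ∑ o ∈ Ccov ∪ Clight ∪ CV, ∑ p ∈ cluster D σ o, dist p (t o)
      ≤ 2 * (∑ o ∈ Ccov ∪ Clight ∪ CV, ∑ p ∈ cluster D σ o, dist p o)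
        + 20 * ε * kmCost D OPT := by
  set opt := kmCost D OPT with hoptdef
  set W := Ccov ∪ Clight ∪ CV with hWdef
  have hε2 : ε ≤ 1 / 2 := by linarith
  have hlog : 0 < Real.log (D.card : ℝ) := by
    apply Real.log_pos
    have : (3 : ℝ) ≤ (D.card : ℝ) := by exact_mod_cast hD3
    linarith
  have hW : ∀ o ∈ W, o ∈ OPT ∧ (cluster D σ o).Nonempty := by
    intro o ho
    rw [hWdef, mem_union, mem_union] at ho
    rcases ho with (ho | ho) | ho
    · exact hCcov o ho
    · exact hClight o ho
    · exact hCV o ho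
  -- clusters are pairwise disjoint
  have hdisj : ∀ o o' : X, o ≠ o' → Disjoint (cluster D σ o) (cluster D σ o') := by
    intro o o' hne
    rw [Finset.disjoint_left]
    intro p hp hp'
    have h1 := (mem_filter.mp hp).2
    have h2 := (mem_filter.mp hp').2
    exact hne (h1 ▸ h2 ▸ rfl)
  -- sums over disjoint clusters are bounded by the sum over D
  have hsum_le : ∀ (T : Finset X) (f : X → ℝ), (∀ p ∈ D, 0 ≤ f p) →
      ∑ o ∈ T, ∑ p ∈ cluster D σ o, f p ≤ ∑ p ∈ D, f p := by
    intro T f hf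
    rw [← Finset.sum_biUnion (fun o _ o' _ hne => hdisj o o' hne)]
    apply Finset.sum_le_sum_of_subset_of_nonneg
    · intro p hp
      obtain ⟨o, _, hpo⟩ := mem_biUnion.mp hp
      exact (mem_filter.mp hpo).1
    · intro p hp _
      exact hf p hp
  -- dist p o = dS p OPT inside the cluster
  have hdist_eq : ∀ o : X, ∀ p ∈ cluster D σ o, dist p o = dS p OPT := by
    intro o p hp
    obtain ⟨hpD, hpo⟩ := mem_filter.mp hp
    have := (hσ p hpD).2
    rwa [hpo] at this
  -- A := total optimal cost of clusters in any subfamily is ≤ opt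
  have hA_le : ∀ T : Finset X,
      ∑ o ∈ T, ∑ p ∈ cluster D σ o, dist p o ≤ opt := by
    intro T
    have : ∑ o ∈ T, ∑ p ∈ cluster D σ o, dist p o
        = ∑ o ∈ T, ∑ p ∈ cluster D σ o, dS p OPT := by
      apply Finset.sum_congr rfl
      intro o _
      exact Finset.sum_congr rfl (fun p hp => hdist_eq o p hp)
    rw [this]
    exact hsum_le T (fun p => dS p OPT) (fun p _ => dS_nonneg p OPT)
  have hdS_sum_le : ∀ T : Finset X,
      ∑ o ∈ T, ∑ p ∈ cluster D σ o, dS p S ≤ 5 * opt := by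
    intro T
    calc ∑ o ∈ T, ∑ p ∈ cluster D σ o, dS p S ≤ ∑ p ∈ D, dS p S :=
          hsum_le T (fun p => dS p S) (fun p _ => dS_nonneg p S)
      _ ≤ 5 * opt := h5
  -- key per-cluster bound on |C_o| * a o
  have hKa : ∀ o ∈ OPT, (cluster D σ o).Nonempty →
      ((cluster D σ o).card : ℝ) * a o
        ≤ (1 + 2 * ε) * ∑ p ∈ cluster D σ o, dist p o := by
    intro o ho hne
    obtain ⟨ha0, _, hq3⟩ := hquant o ho hne
    set C := cluster D σ o
    set F2 := C.filter (fun p => a o ≤ dist p o) with hF2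
    have h1 : (F2.card : ℝ) * a o ≤ ∑ p ∈ F2, dist p o := by
      have := Finset.card_nsmul_le_sum F2 (fun p => dist p o) (a o)
        (fun p hp => (mem_filter.mp hp).2)
      rwa [nsmul_eq_mul] at this
    have h2 : ∑ p ∈ F2, dist p o ≤ ∑ p ∈ C, dist p o := by
      apply Finset.sum_le_sum_of_subset_of_nonneg (filter_subset _ _)
      intro p _ _; exact dist_nonneg
    have h3 : (1 - ε) * (C.card : ℝ) * a o ≤ (F2.card : ℝ) * a o :=
      mul_le_mul_of_nonneg_right hq3 ha0
    have hCa : 0 ≤ (C.card : ℝ) * a o := mul_nonneg (Nat.cast_nonneg _) ha0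
    have hS : (1 - ε) * ((C.card : ℝ) * a o) ≤ ∑ p ∈ C, dist p o := by
      have he : (1 - ε) * ((C.card : ℝ) * a o) = (1 - ε) * (C.card : ℝ) * a o := by ring
      rw [he]; linarith
    have hS2 := mul_le_mul_of_nonneg_left hS (by linarith : (0:ℝ) ≤ 1 + 2 * ε)
    have hx : 0 ≤ (ε * (1 - 2 * ε)) * ((C.card : ℝ) * a o) :=
      mul_nonneg (mul_nonneg hε0.le (by linarith)) hCa
    nlinarith [hS2, hx]
  -- covered clusters
  have hcov' : ∀ o ∈ Ccov, ((cluster D σ o).card : ℝ) * dS o S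
      ≤ (1 + 5 * ε) * (∑ p ∈ cluster D σ o, dist p o)
        + ε * ∑ p ∈ cluster D σ o, dS p S := by
    intro o ho
    obtain ⟨hoOPT, hne⟩ := hCcov o ho
    set C := cluster D σ o
    have hN0 : (0 : ℝ) < (C.card : ℝ) := by
      exact_mod_cast Finset.card_pos.mpr hne
    have hmul := mul_le_mul_of_nonneg_left (hcov o ho) hN0.le
    have hsplit : ∑ p ∈ C, (dist p o + dS p S)
        = (∑ p ∈ C, dist p o) + ∑ p ∈ C, dS p S := Finset.sum_add_distrib
    have hkey : (C.card : ℝ) * ((1 + ε) * a o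
          + ε * ((1 / (C.card : ℝ)) * ∑ p ∈ C, (dist p o + dS p S)))
        = (1 + ε) * ((C.card : ℝ) * a o)
          + ε * ((∑ p ∈ C, dist p o) + ∑ p ∈ C, dS p S) := by
      rw [hsplit]; field_simp
    rw [hkey] at hmul
    have hNa := hKa o hoOPT hne
    have hd_nonneg : 0 ≤ ∑ p ∈ C, dist p o :=
      Finset.sum_nonneg (fun p _ => dist_nonneg)
    have hNa2 := mul_le_mul_of_nonneg_left hNa (by linarith : (0:ℝ) ≤ 1 + ε)
    have hx : 0 ≤ (ε * (1 - 2 * ε)) * (∑ p ∈ C, dist p o) :=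
      mul_nonneg (mul_nonneg hε0.le (by linarith)) hd_nonneg
    nlinarith [hmul, hNa2, hx]
  -- light clusters
  have hlight' : ∀ o ∈ Clight, ((cluster D σ o).card : ℝ) * dS o S
      ≤ (1 + 2 * ε) * (∑ p ∈ cluster D σ o, dist p o)
        + ε ^ 4 * opt / Real.log (D.card : ℝ) := by
    intro o ho
    obtain ⟨hoOPT, hne⟩ := hClight o ho
    obtain ⟨ha0, hq2, _⟩ := hquant o hoOPT hne
    set C := cluster D σ o
    set L := C.filter (fun p => dist p o ≤ a o) with hL
    have hNa := hKa o hoOPT hne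
    have hterm : 0 ≤ ε ^ 4 * opt / Real.log (D.card : ℝ) := by positivity
    by_cases hcase : dS o S ≤ a o
    · have : (C.card : ℝ) * dS o S ≤ (C.card : ℝ) * a o :=
        mul_le_mul_of_nonneg_left hcase (Nat.cast_nonneg _)
      linarith
    · push_neg at hcase
      have hp : ∀ p ∈ L, dS o S - a o ≤ dS p S := by
        intro p hp
        have h1 : dS o S ≤ dist o p + dS p S := dS_triangle o p hSne
        have h2 : dist p o ≤ a o := (mem_filter.mp hp).2
        rw [dist_comm] at h2
        linarith
      have hLsum : (L.card : ℝ) * (dS o S - a o) ≤ ∑ p ∈ L, dS p S := by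
        have := Finset.card_nsmul_le_sum L (fun p => dS p S) (dS o S - a o) hp
        rwa [nsmul_eq_mul] at this
      have hLc : ε * (C.card : ℝ) * (dS o S - a o)
          ≤ (L.card : ℝ) * (dS o S - a o) :=
        mul_le_mul_of_nonneg_right hq2 (by linarith)
      have hchain : ε * ((C.card : ℝ) * (dS o S - a o))
          ≤ ε * (ε ^ 4 * opt / Real.log (D.card : ℝ)) := by
        have h5le := hlight o ho
        have : ε * (ε ^ 4 * opt / Real.log (D.card : ℝ))
            = ε ^ 5 * opt / Real.log (D.card : ℝ) := by ring
        rw [this]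
        calc ε * ((C.card : ℝ) * (dS o S - a o))
            = ε * (C.card : ℝ) * (dS o S - a o) := by ring
          _ ≤ (L.card : ℝ) * (dS o S - a o) := hLc
          _ ≤ ∑ p ∈ L, dS p S := hLsum
          _ ≤ ε ^ 5 * opt / Real.log (D.card : ℝ) := h5le
      have hdiv : (C.card : ℝ) * (dS o S - a o)
          ≤ ε ^ 4 * opt / Real.log (D.card : ℝ) :=
        le_of_mul_le_mul_left hchain hε0
      have : (C.card : ℝ) * dS o S
          = (C.card : ℝ) * (dS o S - a o) + (C.card : ℝ) * a o := by ring
      linarith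
  -- V clusters
  have hV' : ∀ o ∈ CV, ((cluster D σ o).card : ℝ) * dS o S
      ≤ (∑ p ∈ cluster D σ o, dist p o) + ∑ p ∈ cluster D σ o, dS p S := by
    intro o _
    set C := cluster D σ o
    have h1 : (C.card : ℝ) * dS o S = ∑ _p ∈ C, dS o S := by
      rw [Finset.sum_const, nsmul_eq_mul]
    rw [h1, ← Finset.sum_add_distrib]
    apply Finset.sum_le_sum
    intro p _
    have := dS_triangle o p hSne
    rw [dist_comm o p] at this
    linarith
  -- Step A: triangle inequality through t o
  have stepA : ∑ o ∈ W, ∑ p ∈ cluster D σ o, dist p (t o)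
      ≤ (∑ o ∈ W, ∑ p ∈ cluster D σ o, dist p o)
        + ∑ o ∈ W, ((cluster D σ o).card : ℝ) * dS o S := by
    rw [← Finset.sum_add_distrib]
    apply Finset.sum_le_sum
    intro o ho
    obtain ⟨hoOPT, _⟩ := hW o ho
    have hto := (ht o hoOPT).2
    calc ∑ p ∈ cluster D σ o, dist p (t o)
        ≤ ∑ p ∈ cluster D σ o, (dist p o + dS o S) := by
          apply Finset.sum_le_sum
          intro p _
          calc dist p (t o) ≤ dist p o + dist o (t o) := dist_triangle p o (t o)
            _ = dist p o + dS o S := by rw [hto]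
      _ = (∑ p ∈ cluster D σ o, dist p o)
          + ((cluster D σ o).card : ℝ) * dS o S := by
          rw [Finset.sum_add_distrib, Finset.sum_const, nsmul_eq_mul]
  -- split the sums over the union
  have hWdisj1 : Disjoint (Ccov ∪ Clight) CV := by
    rw [disjoint_union_left]; exact ⟨hd2, hd3⟩
  have hsplit : ∀ g : X → ℝ, ∑ o ∈ W, g o = ∑ o ∈ Ccov, g o + ∑ o ∈ Clight, g o
      + ∑ o ∈ CV, g o := by
    intro g
    rw [hWdef, Finset.sum_union hWdisj1, Finset.sum_union hd1]
  -- abbreviations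
  set Acov := ∑ o ∈ Ccov, ∑ p ∈ cluster D σ o, dist p o with hAcov
  set Alight := ∑ o ∈ Clight, ∑ p ∈ cluster D σ o, dist p o with hAlight
  set AV := ∑ o ∈ CV, ∑ p ∈ cluster D σ o, dist p o with hAV
  have hAcov0 : 0 ≤ Acov :=
    Finset.sum_nonneg (fun o _ => Finset.sum_nonneg (fun p _ => dist_nonneg))
  have hAlight0 : 0 ≤ Alight :=
    Finset.sum_nonneg (fun o _ => Finset.sum_nonneg (fun p _ => dist_nonneg))
  have hAV0 : 0 ≤ AV :=
    Finset.sum_nonneg (fun o _ => Finset.sum_nonneg (fun p _ => dist_nonneg))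
  have hAtot : Acov + Alight + AV ≤ opt := by
    have := hA_le W
    rw [hsplit (fun o => ∑ p ∈ cluster D σ o, dist p o)] at this
    exact this
  -- bound the three pieces
  have hcovsum : ∑ o ∈ Ccov, ((cluster D σ o).card : ℝ) * dS o S
      ≤ (1 + 5 * ε) * Acov + 5 * ε * opt := by
    calc ∑ o ∈ Ccov, ((cluster D σ o).card : ℝ) * dS o S
        ≤ ∑ o ∈ Ccov, ((1 + 5 * ε) * (∑ p ∈ cluster D σ o, dist p o)
            + ε * ∑ p ∈ cluster D σ o, dS p S) :=
          Finset.sum_le_sum hcov'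
      _ = (1 + 5 * ε) * Acov + ε * ∑ o ∈ Ccov, ∑ p ∈ cluster D σ o, dS p S := by
          rw [Finset.sum_add_distrib, ← Finset.mul_sum, ← Finset.mul_sum]
      _ ≤ (1 + 5 * ε) * Acov + 5 * ε * opt := by
          have := hdS_sum_le Ccov
          nlinarith [mul_le_mul_of_nonneg_left this hε0.le]
  have hlightsum : ∑ o ∈ Clight, ((cluster D σ o).card : ℝ) * dS o S
      ≤ (1 + 2 * ε) * Alight + ε * opt := by
    calc ∑ o ∈ Clight, ((cluster D σ o).card : ℝ) * dS o S
        ≤ ∑ o ∈ Clight, ((1 + 2 * ε) * (∑ p ∈ cluster D σ o, dist p o)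
            + ε ^ 4 * opt / Real.log (D.card : ℝ)) :=
          Finset.sum_le_sum hlight'
      _ = (1 + 2 * ε) * Alight
          + (Clight.card : ℝ) * (ε ^ 4 * opt / Real.log (D.card : ℝ)) := by
          rw [Finset.sum_add_distrib, ← Finset.mul_sum, Finset.sum_const, nsmul_eq_mul]
      _ ≤ (1 + 2 * ε) * Alight + ε * opt := by
          have hterm : 0 ≤ ε ^ 4 * opt / Real.log (D.card : ℝ) := by positivity
          have h1 : (Clight.card : ℝ) * (ε ^ 4 * opt / Real.log (D.card : ℝ))
              ≤ (Real.log (D.card : ℝ) / ε ^ 3) * (ε ^ 4 * opt / Real.log (D.card : ℝ)) :=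
            mul_le_mul_of_nonneg_right hlightcard hterm
          have h2 : (Real.log (D.card : ℝ) / ε ^ 3) * (ε ^ 4 * opt / Real.log (D.card : ℝ))
              = ε * opt := by
            field_simp
          linarith [h1, h2.le]
  have hVsum : ∑ o ∈ CV, ((cluster D σ o).card : ℝ) * dS o S
      ≤ AV + ε ^ 2 * opt := by
    calc ∑ o ∈ CV, ((cluster D σ o).card : ℝ) * dS o S
        ≤ ∑ o ∈ CV, ((∑ p ∈ cluster D σ o, dist p o)
            + ∑ p ∈ cluster D σ o, dS p S) :=
          Finset.sum_le_sum hV'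
      _ = AV + ∑ o ∈ CV, ∑ p ∈ cluster D σ o, dS p S := Finset.sum_add_distrib
      _ ≤ AV + ε ^ 2 * opt := by linarith [hV]
  -- assemble
  have hmid : ∑ o ∈ W, ((cluster D σ o).card : ℝ) * dS o S
      ≤ (1 + 5 * ε) * Acov + (1 + 2 * ε) * Alight + AV
        + 5 * ε * opt + ε * opt + ε ^ 2 * opt := by
    rw [hsplit (fun o => ((cluster D σ o).card : ℝ) * dS o S)]
    linarith [hcovsum, hlightsum, hVsum]
  have hAW : ∑ o ∈ W, ∑ p ∈ cluster D σ o, dist p o = Acov + Alight + AV :=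
    hsplit (fun o => ∑ p ∈ cluster D σ o, dist p o)
  rw [hAW] at stepA ⊢
  have hεε : ε ^ 2 ≤ ε := by nlinarith [mul_le_mul_of_nonneg_left hε2 hε0.le]
  have hεsq : ε ^ 2 * opt ≤ ε * opt := mul_le_mul_of_nonneg_right hεε hoptpos.le
  have h5A : ε * (Acov + Alight + AV) ≤ ε * opt :=
    mul_le_mul_of_nonneg_left hAtot hε0.le
  nlinarith [stepA, hmid, hεsq, h5A, mul_nonneg hε0.le hAcov0,
    mul_nonneg hε0.le hAlight0, mul_nonneg hε0.le hAV0, hAtot]
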